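/- Let U be a 1-cotilting (R,S)-bimodule and M a module. If H⁰(RΔ)²(M) = 0 and H^{-1}(RΔ)²(M) = 0, then M = 0. Equivalently, if Hom(Ext¹(M,U),U) = 0, Hom(Hom(M,U),U) = 0, and Ext¹(Ext¹(M,U),U) = 0, then M = 0. -/

import Mathlib

set_option linter.unusedVariables false

universe u

open CategoryTheory Opposite Function LinearMap

/-- `Ext¹_A(M,U) = 0`, encoded as: every short exact sequence `0 → U → E → M → 0` splits. -/
def Ext1Vanishes (A : Type u) [Ring A] (M U : Type u) [AddCommGroup M] [Module A M]
    [AddCommGroup U] [Module A U] : Prop :=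
  ∀ (E : Type u) [AddCommGroup E] [Module A E] (i : U →ₗ[A] E) (p : E →ₗ[A] M),
    Function.Injective i → Function.Surjective p → LinearMap.range i = LinearMap.ker p →
    ∃ s : M →ₗ[A] E, p.comp s = LinearMap.id

/-- `U` is a 1-cotilting left `A`-module. -/
def IsCotilting (A : Type u) [Ring A] (U : Type u) [AddCommGroup U] [Module A U] : Prop :=
  (∃ (E₀ E₁ : ModuleCat.{u} A), Module.Injective A E₀ ∧ Module.Injective A E₁ ∧
    ∃ (ι : U →ₗ[A] E₀) (π : E₀ →ₗ[A] E₁),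
      Function.Injective ι ∧ Function.Surjective π ∧ LinearMap.range ι = LinearMap.ker π) ∧
  (∀ α : Type u, Ext1Vanishes A (α → U) U) ∧
  (∀ (M : Type u) [AddCommGroup M] [Module A M],
    (∀ f : M →ₗ[A] U, f = 0) → Ext1Vanishes A M U → Subsingleton M)

def precompMap (A B : Type u) [Ring A] [Ring B] (U : Type u) [AddCommGroup U] [Module A U]
    [Module B U] [SMulCommClass A B U] {M N : Type u} [AddCommGroup M] [Module A M]
    [AddCommGroup N] [Module A N] (f : M →ₗ[A] N) :
    (N →ₗ[A] U) →ₗ[B] (M →ₗ[A] U) where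
  toFun φ := φ.comp f
  map_add' φ ψ := LinearMap.add_comp _ _ _
  map_smul' b φ := rfl

/-- The contravariant functor `Hom_A(-,U) : (A-Mod)ᵒᵖ → B-Mod` induced by an `(A,B)`-bimodule. -/
def dualFunctor (A B : Type u) [Ring A] [Ring B] (U : Type u) [AddCommGroup U] [Module A U]
    [Module B U] [SMulCommClass A B U] :
    (ModuleCat.{u} A)ᵒᵖ ⥤ ModuleCat.{u} B where
  obj M := ModuleCat.of B (M.unop →ₗ[A] U)
  map f := ModuleCat.ofHom (precompMap A B U f.unop.hom)
  map_id M := by ext φ; rfl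
  map_comp f g := by ext φ; rfl

/-- The evaluation map `δ_M : M → Hom_B(Hom_A(M,U),U)`, `m ↦ (φ ↦ φ m)`. -/
def evalMap (A B : Type u) [Ring A] [Ring B] (U : Type u) [AddCommGroup U] [Module A U]
    [Module B U] [SMulCommClass A B U] [SMulCommClass B A U]
    (M : Type u) [AddCommGroup M] [Module A M] :
    M →ₗ[A] ((M →ₗ[A] U) →ₗ[B] U) where
  toFun m :=
    { toFun := fun φ => φ m
      map_add' := fun φ ψ => rfl
      map_smul' := fun b φ => rfl }
  map_add' m n := by ext φ; simp
  map_smul' a m := by ext φ; simp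

/-- The evaluation maps as a natural transformation `id → Δ²`. -/
def evalNat (A B : Type u) [Ring A] [Ring B] (U : Type u) [AddCommGroup U] [Module A U]
    [Module B U] [SMulCommClass A B U] [SMulCommClass B A U] :
    𝟭 (ModuleCat.{u} A) ⟶ (dualFunctor A B U).rightOp ⋙ dualFunctor B A U where
  app M := ModuleCat.ofHom (evalMap A B U M)
  naturality X Y f := by ext x; rfl

variable (R S : Type u) [Ring R] [Ring S] (U : Type u) [AddCommGroup U] [Module R U]
  [Module Sᵐᵒᵖ U] [SMulCommClass R Sᵐᵒᵖ U] [SMulCommClass Sᵐᵒᵖ R U]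

/-- Data of the duality between `D(R)` and `D(Mod-S)` induced by a 1-cotilting bimodule `U`:
`Γ` are the functors `Ext¹(-,U)`, `H` are the functors `H⁰((RHom(-,U))²)`,
`η` the degree-0 components of the units of the derived adjunction,
and `α`, `β` the natural exact sequence `0 → Γ²M → H M → Δ²M → 0`,
with `β ∘ η` being the evaluation maps. -/
structure CotiltingDualityData where
  Γ₁ : (ModuleCat.{u} R)ᵒᵖ ⥤ ModuleCat.{u} Sᵐᵒᵖ
  Γ₂ : (ModuleCat.{u} Sᵐᵒᵖ)ᵒᵖ ⥤ ModuleCat.{u} R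
  H₁ : ModuleCat.{u} R ⥤ ModuleCat.{u} R
  H₂ : ModuleCat.{u} Sᵐᵒᵖ ⥤ ModuleCat.{u} Sᵐᵒᵖ
  η₁ : 𝟭 (ModuleCat.{u} R) ⟶ H₁
  η₂ : 𝟭 (ModuleCat.{u} Sᵐᵒᵖ) ⟶ H₂
  α₁ : Γ₁.rightOp ⋙ Γ₂ ⟶ H₁
  α₂ : Γ₂.rightOp ⋙ Γ₁ ⟶ H₂
  β₁ : H₁ ⟶ (dualFunctor R Sᵐᵒᵖ U).rightOp ⋙ dualFunctor Sᵐᵒᵖ R U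
  β₂ : H₂ ⟶ (dualFunctor Sᵐᵒᵖ R U).rightOp ⋙ dualFunctor R Sᵐᵒᵖ U
  mono_α₁ : ∀ M, Function.Injective (α₁.app M)
  mono_α₂ : ∀ N, Function.Injective (α₂.app N)
  epi_β₁ : ∀ M, Function.Surjective (β₁.app M)
  epi_β₂ : ∀ N, Function.Surjective (β₂.app N)
  exact₁ : ∀ M, LinearMap.range (α₁.app M).hom = LinearMap.ker (β₁.app M).hom
  exact₂ : ∀ N, LinearMap.range (α₂.app N).hom = LinearMap.ker (β₂.app N).hom
  compat₁ : η₁ ≫ β₁ = evalNat R Sᵐᵒᵖ U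
  compat₂ : η₂ ≫ β₂ = evalNat Sᵐᵒᵖ R U
  faithful₁ : ∀ M : ModuleCat.{u} R, (∀ φ : M →ₗ[R] U, φ = 0) →
    Subsingleton (Γ₁.obj (op M)) → Subsingleton M
  faithful₂ : ∀ N : ModuleCat.{u} Sᵐᵒᵖ, (∀ φ : N →ₗ[Sᵐᵒᵖ] U, φ = 0) →
    Subsingleton (Γ₂.obj (op N)) → Subsingleton N

variable {R S U}

/-- A left `R`-module is `D`-reflexive when `η⁰` is an isomorphism and `Hom(Ext¹(M,U),U) = 0`. -/
def CotiltingDualityData.DReflexive₁ (D : CotiltingDualityData R S U) (M : ModuleCat.{u} R) :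
    Prop :=
  IsIso (D.η₁.app M) ∧ ∀ g : (D.Γ₁.obj (op M)) →ₗ[Sᵐᵒᵖ] U, g = 0

/-- A right `S`-module is `D`-reflexive when `η⁰` is an isomorphism and `Hom(Ext¹(N,U),U) = 0`. -/
def CotiltingDualityData.DReflexive₂ (D : CotiltingDualityData R S U) (N : ModuleCat.{u} Sᵐᵒᵖ) :
    Prop :=
  IsIso (D.η₂.app N) ∧ ∀ g : (D.Γ₂.obj (op N)) →ₗ[R] U, g = 0

/-- if `H⁰(RΔ)²(M) = 0` and `H^{-1}(RΔ)²(M) = ΔΓM = 0` then `M = 0`;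
equivalently, if `ΔΓM = 0`, `Δ²M = 0` and `Γ²M = 0` then `M = 0`. -/
theorem statement7 (hRU : IsCotilting R U) (hUS : IsCotilting Sᵐᵒᵖ U)
    (D : CotiltingDualityData R S U) (M : ModuleCat.{u} R) :
    (Subsingleton (D.H₁.obj M) →
      (∀ g : (D.Γ₁.obj (op M)) →ₗ[Sᵐᵒᵖ] U, g = 0) → Subsingleton M) ∧
    ((∀ g : (D.Γ₁.obj (op M)) →ₗ[Sᵐᵒᵖ] U, g = 0) →
      (∀ g : (M →ₗ[R] U) →ₗ[Sᵐᵒᵖ] U, g = 0) →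
      Subsingleton (D.Γ₂.obj (op (D.Γ₁.obj (op M)))) → Subsingleton M) := by

  constructor
  · intro hH hΓ
    -- Γ₂Γ₁M is a subsingleton since α₁ is injective into a subsingleton
    have hsub : Subsingleton (D.Γ₂.obj (op (D.Γ₁.obj (op M)))) := by
      constructor
      intro a b
      exact D.mono_α₁ M (Subsingleton.elim _ _)
    -- all maps M → U vanish, via compat₁
    have hφ : ∀ φ : M →ₗ[R] U, φ = 0 := by
      intro φ
      ext m
      have h1 : (D.η₁.app M ≫ D.β₁.app M) m = (evalMap R Sᵐᵒᵖ U M) m := by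
        rw [← NatTrans.comp_app, D.compat₁]; rfl
      have h2 : (D.η₁.app M) m = 0 := Subsingleton.elim _ _
      have h3 : (evalMap R Sᵐᵒᵖ U M) m = 0 := by
        rw [← h1]
        simp only [ConcreteCategory.comp_apply, h2, map_zero]; rfl
      have h4 := congrArg (fun f => f φ) h3
      exact h4
    have hΓsub : Subsingleton (D.Γ₁.obj (op M)) :=
      D.faithful₂ (D.Γ₁.obj (op M)) hΓ hsub
    exact D.faithful₁ M hφ hΓsub
  · intro hΓ hΔ hsub
    have hφ : ∀ φ : M →ₗ[R] U, φ = 0 := by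
      intro φ
      ext m
      have h3 : (evalMap R Sᵐᵒᵖ U M) m = 0 := hΔ _
      have h4 := congrArg (fun f => f φ) h3
      exact h4
    have hΓsub : Subsingleton (D.Γ₁.obj (op M)) :=
      D.faithful₂ (D.Γ₁.obj (op M)) hΓ hsub
    exact D.faithful₁ M hφ hΓsub
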